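/- Let n ≥ 1. For s ∈ {0,1,2,3} let s̄ := {U ∈ Cl_{p,q} : involute U = (−1)^s U ∧ reverse U = (−1)^{s(s−1)/2} U} (the quaternion-type subspace of type s). Then the real dimension of 0̄ satisfies (as an equality of real numbers) 4 · (Module.finrank ℝ 0̄) = 2^n + 2·(√2)^n · cos(πn/4), i.e. dim 0̄ = 2^{n−2} + 2^{(n−2)/2} cos(πn/4). -/

import Mathlib

open CliffordAlgebra

/-- The quadratic form of signature `(p,q)` on `Fin (p+q) → ℝ`:
`Q(x) = ∑_{i<p} x_i² − ∑_{p≤i<n} x_i²`. -/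
noncomputable def Qpq (p q : ℕ) : QuadraticForm ℝ (Fin (p + q) → ℝ) :=
  QuadraticMap.weightedSumSquares ℝ (fun i : Fin (p + q) => if (i : ℕ) < p then (1 : ℝ) else -1)

/-- The quaternion-type subspace `s̄` of the Clifford algebra `Cl_{p,q}`:
elements `U` with `involute U = (−1)^s • U` and `reverse U = (−1)^{s(s−1)/2} • U`. -/
noncomputable def quatType (p q s : ℕ) : Submodule ℝ (CliffordAlgebra (Qpq p q)) where
  carrier := {U | involute U = ((-1 : ℝ) ^ s) • U ∧
      reverse U = ((-1 : ℝ) ^ (s * (s - 1) / 2)) • U}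
  add_mem' := by
    rintro a b ⟨ha1, ha2⟩ ⟨hb1, hb2⟩
    exact ⟨by simp [ha1, hb1, smul_add], by simp [ha2, hb2, smul_add]⟩
  zero_mem' := by simp
  smul_mem' := by
    rintro c a ⟨h1, h2⟩
    exact ⟨by rw [map_smul, h1, smul_comm], by rw [map_smul, h2, smul_comm]⟩

namespace Shirokov
variable {n : ℕ} (c : Fin n → ℝ)


noncomputable def Qc : QuadraticForm ℝ (Fin n → ℝ) := QuadraticMap.weightedSumSquares ℝ c

lemma Qc_single (i : Fin n) : Qc c (Pi.single i 1) = c i := by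
  simp [Qc, QuadraticMap.weightedSumSquares_apply, Pi.single_apply, apply_ite,
    Finset.sum_ite_eq' Finset.univ i]

lemma Qc_ortho {i j : Fin n} (h : i ≠ j) :
    (Qc c).IsOrtho (Pi.single i 1) (Pi.single j 1) := by
  rw [QuadraticMap.isOrtho_def]
  simp only [Qc, QuadraticMap.weightedSumSquares_apply]
  rw [← Finset.sum_add_distrib]
  refine Finset.sum_congr rfl fun k _ => ?_
  rcases eq_or_ne k i with rfl | hki
  · simp [Pi.single_apply, h.symm, h]
  · rcases eq_or_ne k j with rfl | hkj
    · simp [Pi.single_apply, hki, h.symm]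
    · simp [Pi.single_apply, hki, hkj]

noncomputable def ee (i : Fin n) : CliffordAlgebra (Qc c) := ι (Qc c) (Pi.single i 1)

lemma ee_sq (i : Fin n) : ee c i * ee c i = algebraMap ℝ _ (c i) := by
  rw [ee, ι_sq_scalar, Qc_single]

lemma ee_anticomm {i j : Fin n} (h : i ≠ j) : ee c i * ee c j = -(ee c j * ee c i) :=
  ι_mul_ι_comm_of_isOrtho (Qc_ortho c h)




/-- sign: (-1)^(number of elements of S below i) -/
def sg (i : Fin n) (S : Finset (Fin n)) : ℝ := (-1) ^ (S.filter (· < i)).card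

lemma sg_sq (i : Fin n) (S : Finset (Fin n)) : sg i S * sg i S = 1 := by
  unfold sg; rw [← pow_add]; exact Even.neg_one_pow ⟨_, rfl⟩

lemma sg_erase_of_lt {i j : Fin n} (S : Finset (Fin n)) (hi : i ∈ S) (hij : i < j) :
    sg j (S.erase i) = -sg j S := by
  have hm : i ∈ S.filter (· < j) := by simp [hi, hij]
  unfold sg
  rw [Finset.filter_erase, ← Finset.card_erase_add_one hm, pow_succ]
  ring

lemma sg_erase_of_not_lt {i j : Fin n} (S : Finset (Fin n)) (hij : ¬ i < j) :
    sg j (S.erase i) = sg j S := by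
  unfold sg
  rw [Finset.filter_erase, Finset.erase_eq_of_notMem (by simp [hij])]

lemma sg_insert_of_lt {i j : Fin n} (S : Finset (Fin n)) (hi : i ∉ S) (hij : i < j) :
    sg j (insert i S) = -sg j S := by
  unfold sg
  rw [Finset.filter_insert, if_pos hij, Finset.card_insert_of_notMem (by simp [hi]), pow_succ]
  ring

lemma sg_insert_of_not_lt {i j : Fin n} (S : Finset (Fin n)) (hij : ¬ i < j) :
    sg j (insert i S) = sg j S := by
  unfold sg
  rw [Finset.filter_insert, if_neg hij]

lemma sg_self_insert (i : Fin n) (S : Finset (Fin n)) : sg i (insert i S) = sg i S :=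
  sg_insert_of_not_lt S (lt_irrefl i)

lemma sg_self_erase (i : Fin n) (S : Finset (Fin n)) : sg i (S.erase i) = sg i S :=
  sg_erase_of_not_lt S (lt_irrefl i)

/-- the creation/annihilation operator for e_i on the Fock space -/
noncomputable def Aop (i : Fin n) : (Finset (Fin n) → ℝ) →ₗ[ℝ] (Finset (Fin n) → ℝ) where
  toFun f T := sg i T * (if i ∈ T then f (T.erase i) else c i * f (insert i T))
  map_add' f g := by funext T; by_cases h : i ∈ T <;> simp [h] <;> ring
  map_smul' r f := by funext T; by_cases h : i ∈ T <;> simp [h] <;> ring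

lemma Aop_apply (i : Fin n) (f : Finset (Fin n) → ℝ) (T : Finset (Fin n)) :
    Aop c i f T = sg i T * (if i ∈ T then f (T.erase i) else c i * f (insert i T)) := rfl

lemma Aop_apply_mem {i : Fin n} (f : Finset (Fin n) → ℝ) {T : Finset (Fin n)} (h : i ∈ T) :
    Aop c i f T = sg i T * f (T.erase i) := by rw [Aop_apply, if_pos h]

lemma Aop_apply_not_mem {i : Fin n} (f : Finset (Fin n) → ℝ) {T : Finset (Fin n)} (h : i ∉ T) :
    Aop c i f T = sg i T * (c i * f (insert i T)) := by rw [Aop_apply, if_neg h]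

lemma Aop_sq (i : Fin n) (f : Finset (Fin n) → ℝ) : Aop c i (Aop c i f) = c i • f := by
  funext T
  by_cases h : i ∈ T
  · rw [Aop_apply_mem c _ h, Aop_apply_not_mem c _ (Finset.notMem_erase i T),
      Finset.insert_erase h, sg_self_erase, Pi.smul_apply, smul_eq_mul,
      ← mul_assoc, ← mul_assoc, sg_sq]
    ring
  · rw [Aop_apply_not_mem c _ h, Aop_apply_mem c _ (Finset.mem_insert_self i T),
      Finset.erase_insert h, sg_self_insert, Pi.smul_apply, smul_eq_mul]
    rw [show sg i T * (c i * (sg i T * f T)) = sg i T * sg i T * (c i * f T) by ring, sg_sq]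
    ring

lemma Aop_anticomm {i j : Fin n} (h : i ≠ j) (f : Finset (Fin n) → ℝ) :
    Aop c i (Aop c j f) = - Aop c j (Aop c i f) := by
  wlog hij : i < j generalizing i j
  · rw [this h.symm ((h.lt_or_gt).resolve_left hij), neg_neg]
  funext T
  have hji : ¬ j < i := by omega
  rw [Pi.neg_apply]
  by_cases hi : i ∈ T <;> by_cases hj : j ∈ T
  · rw [Aop_apply_mem c _ hi, Aop_apply_mem c _ (Finset.mem_erase_of_ne_of_mem h.symm hj),
      Aop_apply_mem c _ hj, Aop_apply_mem c _ (Finset.mem_erase_of_ne_of_mem h hi),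
      sg_erase_of_lt T hi hij, sg_erase_of_not_lt T hji, Finset.erase_right_comm]
    ring
  · rw [Aop_apply_mem c _ hi,
      Aop_apply_not_mem c _ (fun hc => hj (Finset.mem_of_mem_erase hc)),
      Aop_apply_not_mem c _ hj, Aop_apply_mem c _ (Finset.mem_insert_of_mem hi),
      sg_erase_of_lt T hi hij, sg_insert_of_not_lt T hji,
      Finset.erase_insert_of_ne h.symm]
    ring
  · rw [Aop_apply_not_mem c _ hi, Aop_apply_mem c _ (Finset.mem_insert_of_mem hj),
      Aop_apply_mem c _ hj,
      Aop_apply_not_mem c _ (fun hc => hi (Finset.mem_of_mem_erase hc)),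
      sg_insert_of_lt T hi hij, sg_erase_of_not_lt T hji,
      Finset.erase_insert_of_ne h]
    ring
  · rw [Aop_apply_not_mem c _ hi,
      Aop_apply_not_mem c _ (by simp [hj, h.symm]),
      Aop_apply_not_mem c _ hj,
      Aop_apply_not_mem c _ (by simp [hi, h]),
      sg_insert_of_lt T hi hij, sg_insert_of_not_lt T hji,
      Finset.insert_comm]
    ring


noncomputable def Av : (Fin n → ℝ) →ₗ[ℝ] Module.End ℝ (Finset (Fin n) → ℝ) where
  toFun v := ∑ i, v i • Aop c i
  map_add' v w := by simp [add_smul, Finset.sum_add_distrib]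
  map_smul' r v := by simp [Finset.smul_sum, smul_smul]

lemma Aop_mul_self (i : Fin n) :
    (Aop c i * Aop c i : Module.End ℝ _) = c i • (1 : Module.End ℝ _) :=
  LinearMap.ext fun f => Aop_sq c i f

lemma Aop_mul_anticomm {i j : Fin n} (h : i ≠ j) :
    (Aop c i * Aop c j : Module.End ℝ _) = -(Aop c j * Aop c i) :=
  LinearMap.ext fun f => Aop_anticomm c h f

lemma Av_sq (v : Fin n → ℝ) : Av c v * Av c v = algebraMap ℝ _ (Qc c v) := by
  have expand : Av c v * Av c v
      = ∑ i : Fin n, ∑ j : Fin n, (v i * v j) • (Aop c i * Aop c j : Module.End ℝ _) := by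
    show (∑ i, v i • Aop c i) * (∑ j, v j • Aop c j) = _
    rw [Finset.sum_mul_sum]
    refine Finset.sum_congr rfl fun i _ => Finset.sum_congr rfl fun j _ => ?_
    rw [smul_mul_assoc, mul_smul_comm, smul_smul]
  have key : Av c v * Av c v = ∑ i : Fin n, (v i * v i) • (Aop c i * Aop c i : Module.End ℝ _) := by
    have h2 : (2 : ℝ) • (Av c v * Av c v)
        = (2 : ℝ) • ∑ i : Fin n, (v i * v i) • (Aop c i * Aop c i : Module.End ℝ _) := by
      have swap : (∑ i : Fin n, ∑ j : Fin n,
            (v i * v j) • (Aop c i * Aop c j : Module.End ℝ (Finset (Fin n) → ℝ)))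
          = ∑ j : Fin n, ∑ i : Fin n,
            (v i * v j) • (Aop c i * Aop c j : Module.End ℝ (Finset (Fin n) → ℝ)) :=
        Finset.sum_comm
      rw [two_smul, two_smul, expand]
      nth_rewrite 2 [swap]
      simp only [← Finset.sum_add_distrib]
      refine Finset.sum_congr rfl fun i _ => ?_
      rw [Finset.sum_eq_single i]
      · intro j _ hji
        rw [Aop_mul_anticomm c hji, mul_comm (v j) (v i), smul_neg, add_neg_cancel]
      · exact fun h => absurd (Finset.mem_univ i) h
    exact smul_right_injective _ (two_ne_zero) h2
  rw [key]
  rw [Module.algebraMap_end_eq_smul_id]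
  rw [show Qc c v = ∑ i, c i * (v i * v i) by
    simp [Qc, QuadraticMap.weightedSumSquares_apply, smul_eq_mul]]
  rw [Finset.sum_smul]
  refine Finset.sum_congr rfl fun i _ => ?_
  rw [Aop_mul_self, smul_smul, mul_comm (v i * v i) (c i)]
  rfl

noncomputable def ρ : CliffordAlgebra (Qc c) →ₐ[ℝ] Module.End ℝ (Finset (Fin n) → ℝ) :=
  CliffordAlgebra.lift (Qc c) ⟨Av c, Av_sq c⟩


lemma Av_apply (v : Fin n → ℝ) : Av c v = ∑ i, v i • Aop c i := rfl

lemma ρ_ee (i : Fin n) : ρ c (ee c i) = Aop c i := by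
  rw [ee, ρ, CliffordAlgebra.lift_ι_apply, Av_apply, Finset.sum_eq_single i] <;>
    simp +contextual [Pi.single_apply]


noncomputable def eS (S : Finset (Fin n)) : CliffordAlgebra (Qc c) :=
  ((S.sort (· ≤ ·)).map (ee c)).prod

lemma eS_empty : eS c ∅ = 1 := by simp [eS]

lemma eS_singleton (i : Fin n) : eS c {i} = ee c i := by simp [eS]

lemma sg_of_min {i : Fin n} {T : Finset (Fin n)} (h : ∀ j ∈ T, ¬ j < i) : sg i T = 1 := by
  unfold sg
  rw [Finset.filter_false_of_mem h, Finset.card_empty, pow_zero]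

lemma Aop_single {i : Fin n} {T : Finset (Fin n)} (hi : i ∉ T) (hmin : ∀ j ∈ T, i < j) :
    Aop c i (Pi.single T 1) = Pi.single (insert i T) (1:ℝ) := by
  funext U
  by_cases hU : U = insert i T
  · subst hU
    rw [Aop_apply_mem c _ (Finset.mem_insert_self i T), Finset.erase_insert hi,
      Pi.single_eq_same, Pi.single_eq_same, sg_of_min ?_, one_mul]
    intro j hj
    rcases Finset.mem_insert.1 hj with rfl | hj
    · exact lt_irrefl _
    · exact asymm (hmin j hj)
  · rw [Pi.single_eq_of_ne hU]
    by_cases hiU : i ∈ U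
    · rw [Aop_apply_mem c _ hiU, Pi.single_eq_of_ne, mul_zero]
      intro hc; apply hU; rw [← hc, Finset.insert_erase hiU]
    · rw [Aop_apply_not_mem c _ hiU, Pi.single_eq_of_ne, mul_zero, mul_zero]
      intro hc
      exact hi (hc ▸ Finset.mem_insert_self i U)

lemma ρ_prod_sorted : ∀ (l : List (Fin n)), l.Pairwise (· < ·) →
    ρ c ((l.map (ee c)).prod) (Pi.single ∅ 1) = Pi.single l.toFinset (1:ℝ)
  | [], _ => by simp
  | a :: l, h => by
    have hs : l.Pairwise (· < ·) := h.of_cons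
    have ha : ∀ j ∈ l.toFinset, a < j := fun j hj =>
      List.rel_of_pairwise_cons h (List.mem_toFinset.mp hj)
    have hamem : a ∉ l.toFinset := fun hmem => lt_irrefl a (ha a hmem)
    rw [List.map_cons, List.prod_cons, map_mul, Module.End.mul_apply,
      ρ_prod_sorted l hs, ρ_ee, Aop_single c hamem ha, List.toFinset_cons]

noncomputable def Lmap : CliffordAlgebra (Qc c) →ₗ[ℝ] (Finset (Fin n) → ℝ) where
  toFun x := ρ c x (Pi.single ∅ 1)
  map_add' x y := by simp
  map_smul' r x := by simp

lemma Lmap_eS (S : Finset (Fin n)) : Lmap c (eS c S) = Pi.single S 1 := by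
  have h := ρ_prod_sorted c (S.sort (· ≤ ·)) ((Finset.sortedLT_sort S).pairwise)
  rw [Finset.sort_toFinset] at h
  exact h

lemma eS_linearIndependent : LinearIndependent ℝ (eS c) := by
  apply LinearIndependent.of_comp (Lmap c)
  have h : (Lmap c) ∘ eS c = fun S => Pi.single S (1:ℝ) := funext (Lmap_eS c)
  rw [h]
  have h2 : (fun S => Pi.single S (1:ℝ)) = ⇑(Pi.basisFun ℝ (Finset (Fin n))) := by
    funext S; simp [Pi.basisFun_apply]
  rw [h2]
  exact (Pi.basisFun ℝ (Finset (Fin n))).linearIndependent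

lemma prod_sorted_eq_eS (l : List (Fin n)) (h : l.Pairwise (· < ·)) :
    (l.map (ee c)).prod = eS c l.toFinset := by
  rw [eS, (List.toFinset_sort (· ≤ ·) h.nodup).mpr (h.imp le_of_lt)]

lemma ee_mul_eS_of_min {a : Fin n} {T : Finset (Fin n)} (ha : a ∉ T) (hmin : ∀ j ∈ T, a < j) :
    ee c a * eS c T = eS c (insert a T) := by
  rw [eS, eS, Finset.sort_insert (· ≤ ·) (fun b hb => (hmin b hb).le) ha,
    List.map_cons, List.prod_cons]

lemma ee_mul_prod_mem_span (l : List (Fin n)) (h : l.Pairwise (· < ·)) (i : Fin n) :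
    ee c i * (l.map (ee c)).prod ∈
      Submodule.span ℝ (eS c '' {T : Finset (Fin n) | T ⊆ insert i l.toFinset}) := by
  induction l generalizing i with
  | nil =>
    refine Submodule.subset_span ⟨{i}, by simp, ?_⟩
    simp [eS_singleton]
  | cons a l ih =>
    have hs : l.Pairwise (· < ·) := h.of_cons
    have ha : ∀ j ∈ l.toFinset, a < j := fun j hj =>
      List.rel_of_pairwise_cons h (List.mem_toFinset.mp hj)
    have hamem : a ∉ l.toFinset := fun hmem => lt_irrefl a (ha a hmem)
    rcases lt_trichotomy i a with hia | rfl | hai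
    · have hcons : (i :: a :: l).Pairwise (· < ·) := by
        refine List.pairwise_cons.mpr ⟨?_, h⟩
        intro b hb
        rcases List.mem_cons.mp hb with rfl | hb
        · exact hia
        · exact hia.trans (List.rel_of_pairwise_cons h hb)
      have : ee c i * ((a :: l).map (ee c)).prod = ((i :: a :: l).map (ee c)).prod := by
        simp
      rw [this, prod_sorted_eq_eS c _ hcons]
      refine Submodule.subset_span ⟨_, ?_, rfl⟩
      intro x hx
      simpa using hx
    · rw [List.map_cons, List.prod_cons, ← mul_assoc, ee_sq, Algebra.algebraMap_eq_smul_one,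
        smul_mul_assoc, one_mul, prod_sorted_eq_eS c l hs]
      refine Submodule.smul_mem _ _ (Submodule.subset_span ⟨_, ?_, rfl⟩)
      intro x hx
      simp [List.mem_toFinset.mp (by simpa using hx)]
    · rw [List.map_cons, List.prod_cons, ← mul_assoc, ee_anticomm c (ne_of_gt hai),
        neg_mul, mul_assoc]
      refine Submodule.neg_mem _ ?_
      have hIH := ih hs i
      refine Submodule.span_induction (p := fun x _ =>
          ee c a * x ∈ Submodule.span ℝ
            (eS c '' {T : Finset (Fin n) | T ⊆ insert i (a :: l).toFinset}))
        ?_ (by simp) ?_ ?_ hIH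
      · rintro x ⟨T, hT, rfl⟩
        have hTsub : T ⊆ insert i l.toFinset := hT
        have hTmin : ∀ j ∈ T, a < j := by
          intro j hj
          rcases Finset.mem_insert.mp (hTsub hj) with rfl | hj'
          · exact hai
          · exact ha j hj'
        have haT : a ∉ T := fun hmem => lt_irrefl a (hTmin a hmem)
        rw [ee_mul_eS_of_min c haT hTmin]
        refine Submodule.subset_span ⟨_, ?_, rfl⟩
        intro x hx
        rcases Finset.mem_insert.mp hx with rfl | hx'
        · simp
        · rcases Finset.mem_insert.mp (hTsub hx') with rfl | h''
          · simp
          · simp [List.mem_toFinset.mp h'']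
      · intro x y _ _ hx hy
        rw [mul_add]
        exact Submodule.add_mem _ hx hy
      · intro r x _ hx
        rw [mul_smul_comm]
        exact Submodule.smul_mem _ _ hx

lemma ee_mul_mem_span {w : CliffordAlgebra (Qc c)}
    (hw : w ∈ Submodule.span ℝ (Set.range (eS c))) (i : Fin n) :
    ee c i * w ∈ Submodule.span ℝ (Set.range (eS c)) := by
  refine Submodule.span_induction (p := fun x _ =>
      ee c i * x ∈ Submodule.span ℝ (Set.range (eS c))) ?_ (by simp) ?_ ?_ hw
  · rintro x ⟨T, rfl⟩
    have h1 : ee c i * eS c T = ee c i * ((T.sort (· ≤ ·)).map (ee c)).prod := rfl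
    rw [h1]
    refine Submodule.span_mono ?_ (ee_mul_prod_mem_span c (T.sort (· ≤ ·)) ((Finset.sortedLT_sort T).pairwise) i)
    rintro x ⟨T', _, rfl⟩
    exact ⟨T', rfl⟩
  · intro x y _ _ hx hy
    rw [mul_add]
    exact Submodule.add_mem _ hx hy
  · intro r x _ hx
    rw [mul_smul_comm]
    exact Submodule.smul_mem _ _ hx

lemma span_eS_top : Submodule.span ℝ (Set.range (eS c)) = ⊤ := by
  set W := Submodule.span ℝ (Set.range (eS c)) with hW
  have one_mem : (1 : CliffordAlgebra (Qc c)) ∈ W := by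
    rw [← eS_empty c]; exact Submodule.subset_span ⟨∅, rfl⟩
  have main : ∀ x : CliffordAlgebra (Qc c), x ∈ W ∧ ∀ w ∈ W, x * w ∈ W := by
    intro x
    induction x using CliffordAlgebra.induction with
    | algebraMap r =>
      constructor
      · rw [Algebra.algebraMap_eq_smul_one]; exact Submodule.smul_mem _ _ one_mem
      · intro w hw
        rw [Algebra.algebraMap_eq_smul_one, smul_mul_assoc, one_mul]
        exact Submodule.smul_mem _ _ hw
    | ι v =>
      have hι : ι (Qc c) v = ∑ j, v j • ee c j := by
        nth_rewrite 1 [← Finset.univ_sum_single v]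
        rw [map_sum]
        refine Finset.sum_congr rfl fun j _ => ?_
        rw [ee, ← map_smul]
        congr 1
        rw [← Pi.single_smul, smul_eq_mul, mul_one]
      constructor
      · rw [hι]
        refine Submodule.sum_mem _ fun j _ => Submodule.smul_mem _ _ ?_
        rw [← eS_singleton c]
        exact Submodule.subset_span ⟨{j}, rfl⟩
      · intro w hw
        rw [hι, Finset.sum_mul]
        refine Submodule.sum_mem _ fun j _ => ?_
        rw [smul_mul_assoc]
        exact Submodule.smul_mem _ _ (ee_mul_mem_span c hw j)
    | mul x y hx hy =>
      refine ⟨?_, fun w hw => ?_⟩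
      · have := hx.2 y hy.1
        simpa using this
      · rw [mul_assoc]
        exact hx.2 _ (hy.2 w hw)
    | add x y hx hy =>
      refine ⟨Submodule.add_mem _ hx.1 hy.1, fun w hw => ?_⟩
      rw [add_mul]
      exact Submodule.add_mem _ (hx.2 w hw) (hy.2 w hw)
  rw [eq_top_iff]
  exact fun x _ => (main x).1

noncomputable def basisCl : Module.Basis (Finset (Fin n)) ℝ (CliffordAlgebra (Qc c)) :=
  Module.Basis.mk (eS_linearIndependent c) (by rw [span_eS_top c])

lemma basisCl_apply (S : Finset (Fin n)) : basisCl c S = eS c S := Module.Basis.mk_apply _ _ _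

lemma involute_eS (S : Finset (Fin n)) :
    involute (eS c S) = ((-1:ℝ) ^ S.card) • eS c S := by
  have h : (S.sort (· ≤ ·)).map (ee c)
      = ((S.sort (· ≤ ·)).map (fun i => Pi.single i (1:ℝ))).map (ι (Qc c)) := by
    rw [List.map_map]; rfl
  rw [eS, h, involute_prod_map_ι]
  simp [Finset.length_sort]

lemma prod_reverse_map (l : List (Fin n)) (h : l.Pairwise (· < ·)) :
    ((l.reverse).map (ee c)).prod
      = ((-1:ℝ) ^ (l.length.choose 2)) • (l.map (ee c)).prod := by
  induction l with
  | nil => simp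
  | cons a t ih =>
    have hs : t.Pairwise (· < ·) := h.of_cons
    have hne : ∀ b ∈ t, b ≠ a := fun b hb => (List.rel_of_pairwise_cons h hb).ne'
    have swap : ∀ (t' : List (Fin n)), (∀ b ∈ t', b ≠ a) →
        (t'.map (ee c)).prod * ee c a
          = ((-1:ℝ) ^ t'.length) • (ee c a * (t'.map (ee c)).prod) := by
      intro t'
      induction t' with
      | nil => simp
      | cons b t'' ih' =>
        intro hball
        have hb : b ≠ a := hball b (List.mem_cons_self)
        have ht'' : ∀ x ∈ t'', x ≠ a := fun x hx => hball x (List.mem_cons_of_mem b hx)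
        rw [List.map_cons, List.prod_cons, mul_assoc, ih' ht'', mul_smul_comm,
          ← mul_assoc, ee_anticomm c hb, List.length_cons, pow_succ]
        rw [neg_mul, mul_assoc, smul_neg, ← neg_smul]
        congr 1
        ring
    rw [List.reverse_cons, List.map_append, List.prod_append, List.map_cons, List.prod_cons,
      List.map_nil, List.prod_nil, mul_one, ih hs, smul_mul_assoc,
      swap t hne, List.length_cons]
    rw [smul_smul, ← pow_add, List.map_cons, List.prod_cons]
    congr 2
    rw [Nat.choose_succ_succ, Nat.choose_one_right, Nat.add_comm]

lemma reverse_eS (S : Finset (Fin n)) :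
    reverse (eS c S) = ((-1:ℝ) ^ (S.card * (S.card - 1) / 2)) • eS c S := by
  have h : (S.sort (· ≤ ·)).map (ee c)
      = ((S.sort (· ≤ ·)).map (fun i => Pi.single i (1:ℝ))).map (ι (Qc c)) := by
    rw [List.map_map]; rfl
  rw [eS, h, reverse_prod_map_ι]
  have h3 : (List.map (ι (Qc c)) (List.map (fun i => Pi.single i (1:ℝ)) (S.sort (· ≤ ·)))).reverse
      = List.map (ee c) ((S.sort (· ≤ ·)).reverse) := by
    rw [← List.map_reverse, ← List.map_reverse, List.map_map]
    rfl
  rw [h3, prod_reverse_map c _ ((Finset.sortedLT_sort S).pairwise), Finset.length_sort,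
    Nat.choose_two_right, ← h]

lemma neg_one_pow_tri_of_mod4_eq_zero {k : ℕ} (h : k % 4 = 0) :
    (-1:ℝ) ^ (k * (k - 1) / 2) = 1 := by
  obtain ⟨m, rfl⟩ : ∃ m, k = 4 * m := ⟨k / 4, by omega⟩
  have hy : 4 * m * (4 * m - 1) = 2 * (2 * m * (4 * m - 1)) := by ring
  rw [hy, Nat.mul_div_cancel_left _ (by norm_num)]
  exact Even.neg_one_pow ⟨m * (4 * m - 1), by ring⟩

lemma neg_one_pow_tri_of_mod4_eq_two {k : ℕ} (h : k % 4 = 2) :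
    (-1:ℝ) ^ (k * (k - 1) / 2) = -1 := by
  obtain ⟨m, rfl⟩ : ∃ m, k = 4 * m + 2 := ⟨k / 4, by omega⟩
  have h1 : 4 * m + 2 - 1 = 4 * m + 1 := by omega
  have hy : (4 * m + 2) * (4 * m + 1) = 2 * ((2 * m + 1) * (4 * m + 1)) := by ring
  rw [h1, hy, Nat.mul_div_cancel_left _ (by norm_num)]
  exact Odd.neg_one_pow ⟨4 * m * m + 3 * m, by ring⟩

noncomputable def quatZero : Submodule ℝ (CliffordAlgebra (Qc c)) where
  carrier := {U | involute U = U ∧ reverse U = U}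
  add_mem' := by rintro a b ⟨ha1, ha2⟩ ⟨hb1, hb2⟩; exact ⟨by simp [ha1, hb1], by simp [ha2, hb2]⟩
  zero_mem' := by simp
  smul_mem' := by rintro r a ⟨h1, h2⟩; exact ⟨by rw [map_smul, h1], by rw [map_smul, h2]⟩

lemma mem_quatZero {U : CliffordAlgebra (Qc c)} :
    U ∈ quatZero c ↔ involute U = U ∧ reverse U = U := Iff.rfl

lemma quatZero_eq_span :
    quatZero c = Submodule.span ℝ (eS c '' {S : Finset (Fin n) | S.card % 4 = 0}) := by
  apply le_antisymm
  · intro U hU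
    obtain ⟨h1, h2⟩ := hU
    set r : Finset (Fin n) → ℝ := fun S => (basisCl c).repr U S with hrdef
    have hrepr : ∑ S, r S • eS c S = U := by
      have := (basisCl c).sum_repr U
      simpa [basisCl_apply] using this
    have coeff_eq : ∀ (g : Finset (Fin n) → ℝ), (∑ S, g S • eS c S = 0) → ∀ S, g S = 0 :=
      fun g hg => Fintype.linearIndependent_iff.mp (eS_linearIndependent c) g hg
    have hinv : ∀ S : Finset (Fin n), r S * ((-1:ℝ) ^ S.card) - r S = 0 := by
      refine coeff_eq _ ?_
      have hI : involute U = ∑ S, (r S * ((-1:ℝ) ^ S.card)) • eS c S := by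
        conv_lhs => rw [← hrepr]
        rw [map_sum]
        refine Finset.sum_congr rfl fun S _ => ?_
        rw [map_smul, involute_eS, smul_smul, mul_comm]
      have := h1
      rw [hI] at this
      simp only [sub_smul]
      rw [Finset.sum_sub_distrib, this, hrepr, sub_self]
    have hrev : ∀ S : Finset (Fin n), r S * ((-1:ℝ) ^ (S.card * (S.card - 1) / 2)) - r S = 0 := by
      refine coeff_eq _ ?_
      have hR : reverse U = ∑ S, (r S * ((-1:ℝ) ^ (S.card * (S.card - 1) / 2))) • eS c S := by
        conv_lhs => rw [← hrepr]
        rw [map_sum]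
        refine Finset.sum_congr rfl fun S _ => ?_
        rw [map_smul, reverse_eS, smul_smul, mul_comm]
      have := h2
      rw [hR] at this
      simp only [sub_smul]
      rw [Finset.sum_sub_distrib, this, hrepr, sub_self]
    have key : ∀ S : Finset (Fin n), S.card % 4 ≠ 0 → r S = 0 := by
      intro S hS
      by_cases hodd : S.card % 2 = 1
      · have hsign : (-1:ℝ) ^ S.card = -1 := Odd.neg_one_pow (Nat.odd_iff.mpr hodd)
        have := hinv S
        rw [hsign] at this
        linarith
      · have h2' : S.card % 4 = 2 := by omega
        have hsign := neg_one_pow_tri_of_mod4_eq_two h2'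
        have := hrev S
        rw [hsign] at this
        linarith
    rw [← hrepr]
    refine Submodule.sum_mem _ fun S _ => ?_
    by_cases hS : S.card % 4 = 0
    · exact Submodule.smul_mem _ _ (Submodule.subset_span ⟨S, hS, rfl⟩)
    · rw [key S hS, zero_smul]
      exact Submodule.zero_mem _
  · rw [Submodule.span_le]
    rintro x ⟨S, hS, rfl⟩
    have hS' : S.card % 4 = 0 := hS
    refine ⟨?_, ?_⟩
    · rw [involute_eS, Even.neg_one_pow (Nat.even_iff.mpr (by omega)), one_smul]
    · rw [reverse_eS, neg_one_pow_tri_of_mod4_eq_zero hS', one_smul]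

lemma finrank_quatZero :
    Module.finrank ℝ (quatZero c) = Fintype.card {S : Finset (Fin n) // S.card % 4 = 0} := by
  have hv : LinearIndependent ℝ (fun t : {S : Finset (Fin n) // S.card % 4 = 0} => eS c t.1) :=
    (eS_linearIndependent c).comp Subtype.val Subtype.val_injective
  have hrange : Set.range (fun t : {S : Finset (Fin n) // S.card % 4 = 0} => eS c t.1)
      = eS c '' {S : Finset (Fin n) | S.card % 4 = 0} := by
    ext x
    constructor
    · rintro ⟨t, rfl⟩; exact ⟨t.1, t.2, rfl⟩
    · rintro ⟨S, hS, rfl⟩; exact ⟨⟨S, hS⟩, rfl⟩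
  rw [quatZero_eq_span, ← hrange, finrank_span_eq_card hv]


lemma sum_pow_card {n : ℕ} (x : ℂ) :
    ∑ S : Finset (Fin n), x ^ S.card = (x + 1) ^ n := by
  have h := Finset.prod_add (fun _ : Fin n => x) (fun _ => (1:ℂ)) Finset.univ
  simp only [Finset.prod_const, one_pow, mul_one, Finset.card_univ,
    Fintype.card_fin, Finset.powerset_univ] at h
  exact h.symm

lemma four_filter (k : ℕ) :
    (if k % 4 = 0 then (4:ℂ) else 0) = 1 + (-1)^k + Complex.I^k + (-Complex.I)^k := by
  obtain ⟨q, r, hr, rfl⟩ : ∃ q r, r < 4 ∧ k = 4*q + r := ⟨k/4, k%4, by omega, by omega⟩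
  have e1 : ∀ x : ℂ, x^4 = 1 → x^(4*q+r) = x^r := by
    intro x hx
    rw [pow_add, pow_mul, hx, one_pow, one_mul]
  rw [e1 (-1) (by norm_num), e1 Complex.I Complex.I_pow_four,
    e1 (-Complex.I) (by rw [neg_pow]; norm_num [Complex.I_pow_four]),
    show (4*q+r) % 4 = r by omega]
  interval_cases r <;> norm_num [pow_succ, Complex.I_sq]

lemma count_id {n : ℕ} (hn : 1 ≤ n) :
    4 * (Fintype.card {S : Finset (Fin n) // S.card % 4 = 0} : ℝ)
      = 2 ^ n + 2 * Real.sqrt 2 ^ n * Real.cos (Real.pi * n / 4) := by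
  have hsqrt : Real.sqrt 2 * Real.sqrt 2 = 2 := Real.mul_self_sqrt (by norm_num)
  -- step 1: complex sum
  have hcardC : (4 * (Fintype.card {S : Finset (Fin n) // S.card % 4 = 0} : ℂ))
      = ∑ S : Finset (Fin n), (if S.card % 4 = 0 then (4:ℂ) else 0) := by
    rw [Fintype.card_subtype, Finset.card_filter]
    push_cast
    rw [Finset.mul_sum]
    refine Finset.sum_congr rfl fun S _ => ?_
    by_cases h : S.card % 4 = 0 <;> simp [h]
  have hsum : (4 * (Fintype.card {S : Finset (Fin n) // S.card % 4 = 0} : ℂ))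
      = 2^n + (1 + Complex.I)^n + (1 - Complex.I)^n := by
    rw [hcardC]
    have : ∀ S : Finset (Fin n), (if S.card % 4 = 0 then (4:ℂ) else 0)
        = 1^S.card + (-1:ℂ)^S.card + Complex.I^S.card + (-Complex.I)^S.card := by
      intro S; rw [four_filter]; norm_num
    rw [Finset.sum_congr rfl fun S _ => this S]
    simp only [Finset.sum_add_distrib, sum_pow_card]
    rw [show ((-1:ℂ)+1) = 0 by ring, zero_pow (by omega), show ((1:ℂ)+1) = 2 by norm_num,
      show (Complex.I + 1) = 1 + Complex.I by ring, show (-Complex.I + 1) = 1 - Complex.I by ring]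
    ring
  -- step 2: polar forms
  have h1 : (1 + Complex.I) = (Real.sqrt 2 : ℂ) * Complex.exp ((Real.pi/4 : ℝ) * Complex.I) := by
    rw [Complex.exp_mul_I, ← Complex.ofReal_cos, ← Complex.ofReal_sin,
      Real.cos_pi_div_four, Real.sin_pi_div_four]
    push_cast
    rw [mul_add]
    rw [show (Real.sqrt 2 : ℂ) * (Real.sqrt 2 / 2 : ℂ) = ((Real.sqrt 2 * Real.sqrt 2 / 2 : ℝ) : ℂ) by push_cast; ring,
      hsqrt]
    push_cast
    rw [show (Real.sqrt 2 : ℂ) * ((Real.sqrt 2 / 2 : ℂ) * Complex.I) = ((Real.sqrt 2 * Real.sqrt 2 / 2 : ℝ) : ℂ) * Complex.I by push_cast; ring,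
      hsqrt]
    norm_num
  have h2 : (1 - Complex.I) = (Real.sqrt 2 : ℂ) * Complex.exp ((-(Real.pi/4) : ℝ) * Complex.I) := by
    rw [Complex.exp_mul_I, ← Complex.ofReal_cos, ← Complex.ofReal_sin,
      Real.cos_neg, Real.sin_neg, Real.cos_pi_div_four, Real.sin_pi_div_four]
    push_cast
    rw [mul_add]
    rw [show (Real.sqrt 2 : ℂ) * (Real.sqrt 2 / 2 : ℂ) = ((Real.sqrt 2 * Real.sqrt 2 / 2 : ℝ) : ℂ) by push_cast; ring,
      hsqrt]
    push_cast
    rw [show (Real.sqrt 2 : ℂ) * (-(Real.sqrt 2 / 2 : ℂ) * Complex.I) = -(((Real.sqrt 2 * Real.sqrt 2 / 2 : ℝ) : ℂ)) * Complex.I by push_cast; ring,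
      hsqrt]
    norm_num
    ring
  have hpow : (1 + Complex.I)^n + (1 - Complex.I)^n
      = ((Real.sqrt 2 ^ n : ℝ) : ℂ) * (2 * Complex.cos ((Real.pi * n / 4 : ℝ) : ℂ)) := by
    have hc : ∀ θ : ℝ, Complex.exp ((θ:ℂ) * Complex.I) + Complex.exp (((-θ : ℝ):ℂ) * Complex.I)
        = 2 * Complex.cos (θ:ℂ) := by
      intro θ
      rw [Complex.cos]
      push_cast
      ring_nf
    rw [h1, h2, mul_pow, mul_pow, ← Complex.exp_nat_mul, ← Complex.exp_nat_mul, ← mul_add]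
    push_cast
    congr 1
    rw [show ((n:ℂ) * (Real.pi/4 * Complex.I) : ℂ) = ((Real.pi * n / 4 : ℝ) : ℂ) * Complex.I by push_cast; ring,
      show ((n:ℂ) * (-(Real.pi/4) * Complex.I) : ℂ) = ((-(Real.pi * n / 4) : ℝ) : ℂ) * Complex.I by push_cast; ring,
      hc (Real.pi * n / 4)]
    push_cast
    ring
  -- combine
  have final : ((4 * (Fintype.card {S : Finset (Fin n) // S.card % 4 = 0} : ℝ) : ℝ) : ℂ)
      = (((2:ℝ) ^ n + 2 * Real.sqrt 2 ^ n * Real.cos (Real.pi * n / 4) : ℝ) : ℂ) := by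
    push_cast
    rw [hsum, add_assoc, hpow, ← Complex.ofReal_cos]
    push_cast
    ring
  exact_mod_cast final


end Shirokov

/-- Theorem 1 (first part), Shirokov: `dim 0̄ = 2^{n−2} + 2^{(n−2)/2} cos(πn/4)`,
stated as `4 · dim 0̄ = 2^n + 2·(√2)^n·cos(πn/4)`. -/
theorem statement0 (p q : ℕ) (hn : 1 ≤ p + q) :
    4 * (Module.finrank ℝ (quatType p q 0) : ℝ) =
      2 ^ (p + q) + 2 * Real.sqrt 2 ^ (p + q) * Real.cos (Real.pi * (p + q) / 4) := by
  have hQ : quatType p q 0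
      = Shirokov.quatZero (fun i : Fin (p+q) => if (i:ℕ) < p then (1:ℝ) else -1) := by
    ext U
    show (involute U = ((-1 : ℝ) ^ 0) • U ∧ reverse U = ((-1 : ℝ) ^ (0 * (0 - 1) / 2)) • U)
      ↔ (involute U = U ∧ reverse U = U)
    norm_num
  have hfr : (Module.finrank ℝ (quatType p q 0) : ℝ)
      = (Fintype.card {S : Finset (Fin (p+q)) // S.card % 4 = 0} : ℝ) := by
    congr 1
    rw [hQ]
    exact Shirokov.finrank_quatZero _
  rw [hfr]
  have := Shirokov.count_id hn
  push_cast at this ⊢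
  exact this
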